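/- Let H be a complex Hilbert space and S, T positive bounded operators on H with T having closed range. Then S ≤ T (Löwner order) if and only if the spectral radius ρ(S^{1/2} T† S^{1/2}) ≤ 1 and ran(S^{1/2}) ⊆ ran(T). -/

import Mathlib

open ContinuousLinearMap
open scoped InnerProductSpace

section MPaux

variable {R : Type*} [Ring R] [StarRing R]

/-- Uniqueness chain for Moore–Penrose inverses (algebraic). -/
lemma mp_star_aux {t x y : R}
    (x1 : t * (x * t) = t) (x2 : x * (t * x) = x)
    (x3 : IsSelfAdjoint (t * x)) (x4 : IsSelfAdjoint (x * t))
    (y1 : t * (y * t) = t) (y2 : y * (t * y) = y)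
    (y3 : IsSelfAdjoint (t * y)) (y4 : IsSelfAdjoint (y * t)) : x = y := by
  have e1 : star x * star t = t * x := by rw [← star_mul]; exact x3.star_eq
  have e2 : star t = star t * star y * star t := by
    conv_lhs => rw [← y1]
    rw [star_mul, star_mul]
  have hx : x = x * (t * y) := by
    calc x = x * (t * x) := x2.symm
      _ = x * (star x * star t) := by rw [e1]
      _ = x * (star x * (star t * star y * star t)) := by conv_lhs => rw [e2]
      _ = x * (star x * star t) * (star y * star t) := by simp only [mul_assoc]
      _ = x * (t * x) * (star y * star t) := by rw [e1]
      _ = x * (star y * star t) := by rw [x2]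
      _ = x * star (t * y) := by rw [star_mul]
      _ = x * (t * y) := by rw [y3.star_eq]
  have e3 : star t * star y = y * t := by rw [← star_mul]; exact y4.star_eq
  have e4 : star t = star t * star x * star t := by
    conv_lhs => rw [← x1]
    rw [star_mul, star_mul]
  have hy : y = x * (t * y) := by
    calc y = y * (t * y) := y2.symm
      _ = y * t * y := by rw [mul_assoc]
      _ = star t * star y * y := by rw [e3]
      _ = star t * star x * star t * star y * y := by conv_lhs => rw [e4]
      _ = star t * star x * (star t * star y * y) := by simp only [mul_assoc]
      _ = star t * star x * (y * t * y) := by rw [e3]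
      _ = star t * star x * y := by rw [mul_assoc y t y, y2]
      _ = star (x * t) * y := by rw [star_mul]
      _ = x * t * y := by rw [x4.star_eq]
      _ = x * (t * y) := by rw [mul_assoc]
  rw [hx, ← hy]

end MPaux

section CSaux

variable {H : Type*} [NormedAddCommGroup H] [InnerProductSpace ℂ H] [CompleteSpace H]

/-- Cauchy–Schwarz inequality for the semi-inner product induced by a positive operator. -/
lemma cs_aux {T : H →L[ℂ] H} (hT : T.IsPositive) (u w : H) :
    ‖(⟪T u, w⟫_ℂ)‖ ^ 2 ≤ RCLike.re ⟪T u, u⟫_ℂ * RCLike.re ⟪T w, w⟫_ℂ := by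
  have hsym : ∀ x y : H, ⟪T x, y⟫_ℂ = ⟪x, T y⟫_ℂ :=
    isSelfAdjoint_iff_isSymmetric.mp hT.isSelfAdjoint
  let c : PreInnerProductSpace.Core ℂ H :=
    { inner := fun x y => ⟪x, T y⟫_ℂ
      conj_inner_symm := fun x y => (inner_conj_symm (T x) y).trans (hsym x y)
      re_inner_nonneg := fun x => hT.re_inner_nonneg_right x
      add_left := fun x y z => inner_add_left x y (T z)
      smul_left := fun x y r => inner_smul_left x (T y) r }
  have key : ‖⟪u, T w⟫_ℂ‖ * ‖⟪w, T u⟫_ℂ‖ ≤ RCLike.re ⟪u, T u⟫_ℂ * RCLike.re ⟪w, T w⟫_ℂ :=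
    InnerProductSpace.Core.inner_mul_inner_self_le (𝕜 := ℂ) (F := H) (c := c) u w
  have h1 : ⟪u, T w⟫_ℂ = ⟪T u, w⟫_ℂ := (hsym u w).symm
  have h2 : ‖⟪w, T u⟫_ℂ‖ = ‖⟪T u, w⟫_ℂ‖ := by
    rw [← inner_conj_symm]; exact RCLike.norm_conj _
  have h3 : RCLike.re ⟪u, T u⟫_ℂ = RCLike.re ⟪T u, u⟫_ℂ := inner_re_symm _ _
  have h4 : RCLike.re ⟪w, T w⟫_ℂ = RCLike.re ⟪T w, w⟫_ℂ := inner_re_symm _ _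
  calc ‖(⟪T u, w⟫_ℂ)‖ ^ 2 = ‖⟪u, T w⟫_ℂ‖ * ‖⟪w, T u⟫_ℂ‖ := by
        rw [h1, h2]; exact pow_two _
    _ ≤ RCLike.re ⟪u, T u⟫_ℂ * RCLike.re ⟪w, T w⟫_ℂ := key
    _ = RCLike.re ⟪T u, u⟫_ℂ * RCLike.re ⟪T w, w⟫_ℂ := by rw [h3, h4]

end CSaux

/-- `Td` is the Moore–Penrose inverse of `T`. -/
def IsMoorePenroseInverse {H : Type*} [NormedAddCommGroup H] [InnerProductSpace ℂ H]
    [CompleteSpace H] (T Td : H →L[ℂ] H) : Prop :=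
  T ∘L Td ∘L T = T ∧ Td ∘L T ∘L Td = Td ∧
    IsSelfAdjoint (T ∘L Td) ∧ IsSelfAdjoint (Td ∘L T)

/-- For positive operators `S, T` with `T` of closed range, `S ≤ T` in the Löwner order iff
`ρ(S^{1/2} T† S^{1/2}) ≤ 1` and `ran(S^{1/2}) ⊆ ran(T)`. -/
theorem loewner_iff_spectralRadius_le_one_and_range_subset
    {H : Type*} [NormedAddCommGroup H] [InnerProductSpace ℂ H] [CompleteSpace H]
    (S T Ssqrt Td : H →L[ℂ] H)
    (hS : S.IsPositive) (hT : T.IsPositive)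
    (hTcr : IsClosed (LinearMap.range (T : H →ₗ[ℂ] H) : Set H))
    (hSsqrt : Ssqrt.IsPositive) (hSsqrt2 : Ssqrt ∘L Ssqrt = S)
    (hTd : IsMoorePenroseInverse T Td) :
    (T - S).IsPositive ↔
      spectralRadius ℂ (Ssqrt ∘L Td ∘L Ssqrt) ≤ 1 ∧
        LinearMap.range (Ssqrt : H →ₗ[ℂ] H) ≤ LinearMap.range (T : H →ₗ[ℂ] H) := by
  obtain ⟨h1, h2, h3, h4⟩ := hTd
  have hTsa : IsSelfAdjoint T := hT.isSelfAdjoint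
  have hm1 : T * (Td * T) = T := h1
  have hm2 : Td * (T * Td) = Td := h2
  have h3' : IsSelfAdjoint (T * Td) := h3
  have h4' : IsSelfAdjoint (Td * T) := h4
  -- `Td` is selfadjoint
  have hTdsa : IsSelfAdjoint Td := by
    have hy1 : T * (star Td * T) = T := by
      have h := congrArg star hm1
      rw [star_mul, star_mul, hTsa.star_eq, mul_assoc] at h
      exact h
    have hy2 : star Td * (T * star Td) = star Td := by
      have h := congrArg star hm2
      rw [star_mul, star_mul, hTsa.star_eq, mul_assoc] at h
      exact h
    have hy3 : IsSelfAdjoint (T * star Td) := by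
      have e : T * star Td = Td * T := by
        conv_lhs => rw [← hTsa.star_eq]
        rw [← star_mul, h4'.star_eq]
      rw [e]; exact h4'
    have hy4 : IsSelfAdjoint (star Td * T) := by
      have e : star Td * T = T * Td := by
        conv_lhs => rw [← hTsa.star_eq]
        rw [← star_mul, h3'.star_eq]
      rw [e]; exact h3'
    exact (mp_star_aux hm1 hm2 h3' h4' hy1 hy2 hy3 hy4).symm
  -- symmetry of the various operators
  have hTsym : ∀ x y : H, ⟪T x, y⟫_ℂ = ⟪x, T y⟫_ℂ :=
    isSelfAdjoint_iff_isSymmetric.mp hTsa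
  have hSsym : ∀ x y : H, ⟪Ssqrt x, y⟫_ℂ = ⟪x, Ssqrt y⟫_ℂ :=
    isSelfAdjoint_iff_isSymmetric.mp hSsqrt.isSelfAdjoint
  -- pointwise Moore–Penrose identities
  have hTTdT : ∀ x, T (Td (T x)) = T x := by
    intro x
    have := DFunLike.congr_fun h1 x
    simpa using this
  have hproj : ∀ y ∈ LinearMap.range (T : H →ₗ[ℂ] H), T (Td y) = y := by
    rintro _ ⟨w, rfl⟩; exact hTTdT w
  -- the quadratic form of `S`
  have hSq : ∀ x, RCLike.re ⟪S x, x⟫_ℂ = ‖Ssqrt x‖ ^ 2 := by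
    intro x
    have hx : S x = Ssqrt (Ssqrt x) := by rw [← hSsqrt2]; simp
    rw [hx, hSsym (Ssqrt x) x]
    exact inner_self_eq_norm_sq _
  -- selfadjointness of `A := Ssqrt ∘L Td ∘L Ssqrt`
  have hAsa : IsSelfAdjoint (Ssqrt ∘L Td ∘L Ssqrt) := by
    show star (Ssqrt * (Td * Ssqrt)) = Ssqrt * (Td * Ssqrt)
    rw [star_mul, star_mul, hSsqrt.isSelfAdjoint.star_eq, hTdsa.star_eq, mul_assoc]
  -- key identity given the range condition
  have key1 : LinearMap.range (Ssqrt : H →ₗ[ℂ] H) ≤ LinearMap.range (T : H →ₗ[ℂ] H) → ∀ v : H,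
      RCLike.re ⟪(Ssqrt ∘L Td ∘L Ssqrt) v, v⟫_ℂ
        = RCLike.re ⟪T (Td (Ssqrt v)), Td (Ssqrt v)⟫_ℂ := by
    intro hrange v
    have hv : T (Td (Ssqrt v)) = Ssqrt v := hproj _ (hrange ⟨v, rfl⟩)
    have : (Ssqrt ∘L Td ∘L Ssqrt) v = Ssqrt (Td (Ssqrt v)) := by simp
    rw [this, hSsym (Td (Ssqrt v)) v]
    nth_rewrite 2 [← hv]
    exact inner_re_symm _ _
  -- the spectral radius condition is a quadratic form bound
  have norm_iff : LinearMap.range (Ssqrt : H →ₗ[ℂ] H) ≤ LinearMap.range (T : H →ₗ[ℂ] H) →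
      (spectralRadius ℂ (Ssqrt ∘L Td ∘L Ssqrt) ≤ 1 ↔
        ∀ v : H, RCLike.re ⟪(Ssqrt ∘L Td ∘L Ssqrt) v, v⟫_ℂ ≤ ‖v‖ ^ 2) := by
    intro hrange
    have hApos : (Ssqrt ∘L Td ∘L Ssqrt).IsPositive := by
      refine ⟨isSelfAdjoint_iff_isSymmetric.mp hAsa, fun v => ?_⟩
      rw [reApplyInnerSelf_apply, key1 hrange v]
      exact hT.re_inner_nonneg_left _
    have h0A : (0 : H →L[ℂ] H) ≤ Ssqrt ∘L Td ∘L Ssqrt :=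
      (nonneg_iff_isPositive _).mpr hApos
    rw [hAsa.spectralRadius_eq_nnnorm, ENNReal.coe_le_one_iff,
      CStarAlgebra.nnnorm_le_one_iff_of_nonneg _ h0A, ContinuousLinearMap.le_def]
    constructor
    · intro hp v
      have h := hp.re_inner_nonneg_left v
      rw [sub_apply, one_apply_eq_self, inner_sub_left, map_sub, inner_self_eq_norm_sq] at h
      linarith
    · intro hb
      refine ⟨isSelfAdjoint_iff_isSymmetric.mp ((IsSelfAdjoint.one _).sub hAsa), fun v => ?_⟩
      rw [reApplyInnerSelf_apply, sub_apply, one_apply_eq_self, inner_sub_left, map_sub,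
        inner_self_eq_norm_sq]
      have := hb v
      linarith
  constructor
  · -- forward direction
    intro h
    have hST : ∀ x, RCLike.re ⟪S x, x⟫_ℂ ≤ RCLike.re ⟪T x, x⟫_ℂ := by
      intro x
      have hx := h.re_inner_nonneg_left x
      rw [sub_apply, inner_sub_left, map_sub] at hx
      linarith
    have hker : ∀ x, T x = 0 → Ssqrt x = 0 := by
      intro x hx
      have hx1 := hST x
      rw [hx, inner_zero_left, map_zero] at hx1
      rw [hSq x] at hx1
      have : ‖Ssqrt x‖ = 0 := by nlinarith [norm_nonneg (Ssqrt x)]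
      exact norm_eq_zero.mp this
    have hrange : LinearMap.range (Ssqrt : H →ₗ[ℂ] H) ≤ LinearMap.range (T : H →ₗ[ℂ] H) := by
      have hTT : (LinearMap.range (T : H →ₗ[ℂ] H))ᗮ = LinearMap.ker (T : H →ₗ[ℂ] H) := by
        apply le_antisymm
        · intro z hz
          rw [Submodule.mem_orthogonal] at hz
          have h0 : ∀ x : H, ⟪x, T z⟫_ℂ = 0 := by
            intro x
            rw [← hTsym x z]
            exact hz _ ⟨x, rfl⟩
          have := h0 (T z)
          rw [inner_self_eq_zero] at this
          exact LinearMap.mem_ker.mpr this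
        · intro z hz
          rw [Submodule.mem_orthogonal]
          rintro _ ⟨x, rfl⟩
          rw [ContinuousLinearMap.coe_coe, hTsym x z, (show T z = 0 from LinearMap.mem_ker.mp hz), inner_zero_right]
      have hcl : (LinearMap.range (T : H →ₗ[ℂ] H)).topologicalClosure = LinearMap.range (T : H →ₗ[ℂ] H) :=
        hTcr.submodule_topologicalClosure_eq
      have hdd : (LinearMap.ker (T : H →ₗ[ℂ] H))ᗮ = LinearMap.range (T : H →ₗ[ℂ] H) := by
        rw [← hTT, Submodule.orthogonal_orthogonal_eq_closure, hcl]
      rw [← hdd]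
      rintro _ ⟨x, rfl⟩
      rw [Submodule.mem_orthogonal]
      intro u hu
      rw [ContinuousLinearMap.coe_coe, ← hSsym u x, hker u (LinearMap.mem_ker.mp hu), inner_zero_left]
    refine ⟨(norm_iff hrange).mpr fun v => ?_, hrange⟩
    rw [key1 hrange v]
    set w := Td (Ssqrt v) with hw
    have hTw : T w = Ssqrt v := hproj _ (hrange ⟨v, rfl⟩)
    have e1 : RCLike.re ⟪T w, w⟫_ℂ ≤ ‖v‖ * ‖Ssqrt w‖ := by
      calc RCLike.re ⟪T w, w⟫_ℂ = RCLike.re ⟪Ssqrt v, w⟫_ℂ := by rw [hTw]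
        _ ≤ ‖(⟪Ssqrt v, w⟫_ℂ)‖ := RCLike.re_le_norm _
        _ = ‖(⟪v, Ssqrt w⟫_ℂ)‖ := by rw [hSsym]
        _ ≤ ‖v‖ * ‖Ssqrt w‖ := norm_inner_le_norm _ _
    have e2 : ‖Ssqrt w‖ ^ 2 ≤ RCLike.re ⟪T w, w⟫_ℂ := by
      rw [← hSq w]; exact hST w
    have e0 : (0 : ℝ) ≤ RCLike.re ⟪T w, w⟫_ℂ := hT.re_inner_nonneg_left w
    nlinarith [norm_nonneg v, norm_nonneg (Ssqrt w), sq_nonneg (‖v‖ - ‖Ssqrt w‖)]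
  · -- backward direction
    rintro ⟨hρ, hrange⟩
    have hb := (norm_iff hrange).mp hρ
    refine ⟨isSelfAdjoint_iff_isSymmetric.mp (hTsa.sub hS.isSelfAdjoint), fun u => ?_⟩
    rw [reApplyInnerSelf_apply, sub_apply, inner_sub_left, map_sub, sub_nonneg]
    set v := Ssqrt u with hv
    set w := Td (Ssqrt v) with hw
    have hTw : T w = Ssqrt v := hproj _ (hrange ⟨v, rfl⟩)
    have c1 : RCLike.re ⟪S u, u⟫_ℂ = ‖v‖ ^ 2 := hSq u
    have c2 : RCLike.re ⟪T u, w⟫_ℂ = ‖v‖ ^ 2 := by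
      rw [hTsym u w, hTw, ← hSsym u v, ← hv]
      exact inner_self_eq_norm_sq _
    have c3 : RCLike.re ⟪T w, w⟫_ℂ ≤ ‖v‖ ^ 2 := by
      rw [← key1 hrange v]
      exact hb v
    have c4 : (‖v‖ ^ 2) ^ 2 ≤ RCLike.re ⟪T u, u⟫_ℂ * ‖v‖ ^ 2 := by
      calc (‖v‖ ^ 2) ^ 2 = (RCLike.re ⟪T u, w⟫_ℂ) ^ 2 := by rw [c2]
        _ ≤ ‖(⟪T u, w⟫_ℂ)‖ ^ 2 := by
            have h := RCLike.abs_re_le_norm (⟪T u, w⟫_ℂ)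
            calc (RCLike.re ⟪T u, w⟫_ℂ) ^ 2 = |RCLike.re ⟪T u, w⟫_ℂ| ^ 2 := (sq_abs _).symm
              _ ≤ ‖(⟪T u, w⟫_ℂ)‖ ^ 2 := pow_le_pow_left₀ (abs_nonneg _) h 2
        _ ≤ RCLike.re ⟪T u, u⟫_ℂ * RCLike.re ⟪T w, w⟫_ℂ := cs_aux hT u w
        _ ≤ RCLike.re ⟪T u, u⟫_ℂ * ‖v‖ ^ 2 :=
            mul_le_mul_of_nonneg_left c3 (hT.re_inner_nonneg_left u)
    rw [c1]
    rcases eq_or_ne (‖v‖) 0 with h0 | h0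
    · rw [h0]
      simpa using hT.re_inner_nonneg_left u
    · have hpos : (0 : ℝ) < ‖v‖ ^ 2 := by positivity
      have : ‖v‖ ^ 2 * ‖v‖ ^ 2 ≤ RCLike.re ⟪T u, u⟫_ℂ * ‖v‖ ^ 2 := by
        rw [← pow_two]; exact c4
      exact le_of_mul_le_mul_right this hpos
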